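/- Let I be a dense linear order without endpoints that is open strongly surjective, and let (A_i)_{i∈I} be a family of nonempty strongly surjective linear orders such that for every i ∈ I the set {j ∈ I : A_j ≅ A_i} is dense in I. Then the sum Σ_{i∈I} A_i is strongly surjective. -/

import Mathlib

/-- A linear order is strongly surjective if it surjects monotonically onto each of its
nonempty suborders. -/
def StronglySurjective (L : Type*) [LinearOrder L] : Prop :=
  ∀ S : Set L, S.Nonempty → ∃ f : L → S, Monotone f ∧ Function.Surjective f

/-- A linear order is open strongly surjective if the surjections onto suborders can be
chosen so that every fiber has neither a minimum nor a maximum. -/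
def OpenStronglySurjective (L : Type*) [LinearOrder L] : Prop :=
  ∀ S : Set L, S.Nonempty → ∃ f : L → S, Monotone f ∧ Function.Surjective f ∧
    ∀ s : S, (∀ x, f x = s → ∃ y, f y = s ∧ y < x) ∧ (∀ x, f x = s → ∃ y, f y = s ∧ x < y)

section Aux
variable {L : Type*} [LinearOrder L]

lemma SS.cof (h : StronglySurjective L) [Nonempty L] :
    ∃ z : ℕ → L, ∀ x : L, ∃ n, x ≤ z n := by
  classical
  by_cases hmax : ∃ m : L, ∀ x, x ≤ m
  · obtain ⟨m, hm⟩ := hmax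
    exact ⟨fun _ => m, fun x => ⟨0, hm x⟩⟩
  · push_neg at hmax
    have step : ∀ m : L, ∃ x, m < x := by
      intro m
      obtain ⟨x, hx⟩ := hmax m
      exact ⟨x, hx⟩
    choose nxt hnxt using step
    set y : ℕ → L := fun n => nxt^[n] (Classical.arbitrary L) with hy
    have hys : StrictMono y := by
      apply strictMono_nat_of_lt_succ
      intro n
      have hstep : y (n + 1) = nxt (y n) := by
        simp [hy, Function.iterate_succ_apply']
      rw [hstep]
      exact hnxt _
    obtain ⟨f, hfm, hfs⟩ := h (Set.range y) ⟨y 0, Set.mem_range_self 0⟩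
    choose zf hzf using hfs
    refine ⟨fun n => zf ⟨y (n + 1), Set.mem_range_self _⟩, fun x => ?_⟩
    obtain ⟨m, hm⟩ := (f x).2
    refine ⟨m, ?_⟩
    by_contra hlt
    push_neg at hlt
    have h1 := hfm hlt.le
    rw [hzf] at h1
    have h2 : y (m + 1) ≤ y m := by
      have h3 := Subtype.coe_le_coe.mpr h1
      rw [← hm] at h3
      exact h3
    exact absurd h2 (not_le.mpr (hys (Nat.lt_succ_self m)))

lemma SS.coi (h : StronglySurjective L) [Nonempty L] :
    ∃ z : ℕ → L, ∀ x : L, ∃ n, z n ≤ x := by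
  classical
  by_cases hmin : ∃ m : L, ∀ x, m ≤ x
  · obtain ⟨m, hm⟩ := hmin
    exact ⟨fun _ => m, fun x => ⟨0, hm x⟩⟩
  · push_neg at hmin
    have step : ∀ m : L, ∃ x, x < m := by
      intro m
      obtain ⟨x, hx⟩ := hmin m
      exact ⟨x, hx⟩
    choose nxt hnxt using step
    set y : ℕ → L := fun n => nxt^[n] (Classical.arbitrary L) with hy
    have hys : StrictAnti y := by
      apply strictAnti_nat_of_succ_lt
      intro n
      have hstep : y (n + 1) = nxt (y n) := by
        simp [hy, Function.iterate_succ_apply']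
      rw [hstep]
      exact hnxt _
    obtain ⟨f, hfm, hfs⟩ := h (Set.range y) ⟨y 0, Set.mem_range_self 0⟩
    choose zf hzf using hfs
    refine ⟨fun n => zf ⟨y (n + 1), Set.mem_range_self _⟩, fun x => ?_⟩
    obtain ⟨m, hm⟩ := (f x).2
    refine ⟨m, ?_⟩
    by_contra hlt
    push_neg at hlt
    have h1 := hfm hlt.le
    rw [hzf] at h1
    have h2 : y m ≤ y (m + 1) := by
      have h3 := Subtype.coe_le_coe.mpr h1
      rw [← hm] at h3
      exact h3
    exact absurd h2 (not_le.mpr (hys (Nat.lt_succ_self m)))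

lemma SS.cof_subset (h : StronglySurjective L) (X : Set L) (hX : X.Nonempty) :
    ∃ c : ℕ → ↥X, ∀ s : ↥X, ∃ n, s ≤ c n := by
  have : Nonempty L := ⟨hX.some⟩
  obtain ⟨z, hz⟩ := SS.cof h
  obtain ⟨f, hfm, hfs⟩ := h X hX
  refine ⟨fun n => f (z n), fun s => ?_⟩
  obtain ⟨w, hw⟩ := hfs s
  obtain ⟨n, hn⟩ := hz w
  exact ⟨n, hw ▸ hfm hn⟩

lemma SS.coi_subset (h : StronglySurjective L) (X : Set L) (hX : X.Nonempty) :
    ∃ c : ℕ → ↥X, ∀ s : ↥X, ∃ n, c n ≤ s := by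
  have : Nonempty L := ⟨hX.some⟩
  obtain ⟨z, hz⟩ := SS.coi h
  obtain ⟨f, hfm, hfs⟩ := h X hX
  refine ⟨fun n => f (z n), fun s => ?_⟩
  obtain ⟨w, hw⟩ := hfs s
  obtain ⟨n, hn⟩ := hz w
  exact ⟨n, hw ▸ hfm hn⟩

end Aux

def castIso {I : Type*} (A : I → Type*) [∀ i, LinearOrder (A i)] {i j : I} (h : i = j) :
    A i ≃o A j := by subst h; exact OrderIso.refl _

lemma SS.block {I : Type*} [LinearOrder I] (A : I → Type*) [∀ i, LinearOrder (A i)]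
    (t : I) (hSSt : StronglySurjective (A t))
    (hd : ∀ x y : I, x < y → ∃ j, x < j ∧ j < y ∧ Nonempty (A j ≃o A t))
    (F : Set I) (hne : F.Nonempty)
    (hconv : ∀ a ∈ F, ∀ b ∈ F, ∀ x : I, a ≤ x → x ≤ b → x ∈ F)
    (hnomax : ∀ i ∈ F, ∃ j ∈ F, i < j) (hnomin : ∀ i ∈ F, ∃ j ∈ F, j < i)
    (hcof : ∃ cf : ℕ → ↥F, ∀ s : ↥F, ∃ n, s ≤ cf n)
    (hcoi : ∃ ci : ℕ → ↥F, ∀ s : ↥F, ∃ n, ci n ≤ s)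
    (St : Set (A t)) (hSt : St.Nonempty) :
    ∃ φ : (i : I) → A i → ↥St,
      (∀ i ∈ F, ∀ i' ∈ F, i < i' → ∀ a a', φ i a ≤ φ i' a') ∧
      (∀ i, Monotone (φ i)) ∧
      (∀ s : ↥St, ∃ i ∈ F, ∃ a, φ i a = s) := by
  classical
  obtain ⟨cf, hcf⟩ := hcof
  obtain ⟨ci, hci⟩ := hcoi
  obtain ⟨i₀, hi₀⟩ := hne
  -- step lemmas
  have stepU : ∀ x ∈ F, ∀ b ∈ F, ∃ j, j ∈ F ∧ x < j ∧ b < j ∧ Nonempty (A j ≃o A t) := by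
    intro x hx b hb
    have hmF : max x b ∈ F := by rcases max_choice x b with h | h <;> rw [h] <;> assumption
    obtain ⟨y, hy, hmy⟩ := hnomax _ hmF
    obtain ⟨j, hj1, hj2, hj3⟩ := hd _ _ hmy
    exact ⟨j, hconv _ hmF _ hy _ hj1.le hj2.le, (le_max_left x b).trans_lt hj1,
      (le_max_right x b).trans_lt hj1, hj3⟩
  have stepD : ∀ x ∈ F, ∀ b ∈ F, ∃ j, j ∈ F ∧ j < x ∧ j < b ∧ Nonempty (A j ≃o A t) := by
    intro x hx b hb
    have hmF : min x b ∈ F := by rcases min_choice x b with h | h <;> rw [h] <;> assumption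
    obtain ⟨y, hy, hmy⟩ := hnomin _ hmF
    obtain ⟨j, hj1, hj2, hj3⟩ := hd _ _ hmy
    exact ⟨j, hconv _ hy _ hmF _ hj1.le hj2.le, hj2.trans_le (min_le_left x b),
      hj2.trans_le (min_le_right x b), hj3⟩
  choose su hsu1 hsu2 hsu3 hsu4 using stepU
  choose sd hsd1 hsd2 hsd3 hsd4 using stepD
  -- upward sequence of copies of A t
  let p : ℕ → {j : I // j ∈ F} := fun n =>
    Nat.rec ⟨su i₀ hi₀ i₀ hi₀, hsu1 _ _ _ _⟩
      (fun n prev => ⟨su prev.1 prev.2 (cf n).1 (cf n).2, hsu1 _ _ _ _⟩) n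
  have hpsucc : ∀ n, (p (n + 1)).1 = su (p n).1 (p n).2 (cf n).1 (cf n).2 := fun _ => rfl
  have hpiso : ∀ n, Nonempty (A (p n).1 ≃o A t) := by
    intro n
    cases n with
    | zero => exact hsu4 _ _ _ _
    | succ n => rw [hpsucc]; exact hsu4 _ _ _ _
  have hpmono : ∀ n, (p n).1 < (p (n + 1)).1 := by
    intro n; rw [hpsucc]; exact hsu2 _ _ _ _
  have hpcf : ∀ n, (cf n).1 < (p (n + 1)).1 := by
    intro n; rw [hpsucc]; exact hsu3 _ _ _ _
  have hpstrict : StrictMono (fun n => (p n).1) := strictMono_nat_of_lt_succ hpmono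
  -- downward sequence
  let q : ℕ → {j : I // j ∈ F} := fun n =>
    Nat.rec ⟨sd (p 0).1 (p 0).2 (p 0).1 (p 0).2, hsd1 _ _ _ _⟩
      (fun n prev => ⟨sd prev.1 prev.2 (ci n).1 (ci n).2, hsd1 _ _ _ _⟩) n
  have hqsucc : ∀ n, (q (n + 1)).1 = sd (q n).1 (q n).2 (ci n).1 (ci n).2 := fun _ => rfl
  have hq0 : (q 0).1 < (p 0).1 := hsd2 _ _ _ _
  have hqiso : ∀ n, Nonempty (A (q n).1 ≃o A t) := by
    intro n
    cases n with
    | zero => exact hsd4 _ _ _ _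
    | succ n => rw [hqsucc]; exact hsd4 _ _ _ _
  have hqmono : ∀ n, (q (n + 1)).1 < (q n).1 := by
    intro n; rw [hqsucc]; exact hsd2 _ _ _ _
  have hqci : ∀ n, (q (n + 1)).1 < (ci n).1 := by
    intro n; rw [hqsucc]; exact hsd3 _ _ _ _
  have hqstrict : StrictAnti (fun n => (q n).1) := strictAnti_nat_of_succ_lt hqmono
  -- the ℤ-indexed sequence
  have hjj : ∃ jj : ℤ → I, StrictMono jj ∧ (∀ z, jj z ∈ F) ∧
      (∀ z, Nonempty (A (jj z) ≃o A t)) ∧ (∀ i ∈ F, ∃ z, i < jj z) ∧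
      (∀ i ∈ F, ∃ z, jj z < i) := by
    refine ⟨fun z => if 0 ≤ z then (p z.toNat).1 else (q (-z - 1).toNat).1, ?_, ?_, ?_, ?_, ?_⟩
    · intro z z' h
      by_cases h1 : 0 ≤ z
      · have h2 : 0 ≤ z' := by omega
        simp only [if_pos h1, if_pos h2]
        exact hpstrict (by omega)
      · by_cases h2 : 0 ≤ z'
        · simp only [if_neg h1, if_pos h2]
          calc (q ((-z - 1).toNat)).1 ≤ (q 0).1 := hqstrict.antitone (Nat.zero_le _)
            _ < (p 0).1 := hq0
            _ ≤ (p z'.toNat).1 := hpstrict.monotone (Nat.zero_le _)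
        · simp only [if_neg h1, if_neg h2]
          exact hqstrict (by omega)
    · intro z
      by_cases h : 0 ≤ z
      · simp only [if_pos h]; exact (p _).2
      · simp only [if_neg h]; exact (q _).2
    · intro z
      by_cases h : 0 ≤ z
      · simp only []; beta_reduce; rw [if_pos h]; exact hpiso _
      · simp only []; beta_reduce; rw [if_neg h]; exact hqiso _
    · intro i hi
      obtain ⟨n, hn⟩ := hcf ⟨i, hi⟩
      refine ⟨(n : ℤ) + 1, ?_⟩
      simp only []
      rw [if_pos (by omega : (0:ℤ) ≤ (n : ℤ) + 1)]
      have ht1 : ((n : ℤ) + 1).toNat = n + 1 := by omega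
      rw [ht1]
      exact lt_of_le_of_lt (Subtype.coe_le_coe.mpr hn) (hpcf n)
    · intro i hi
      obtain ⟨n, hn⟩ := hci ⟨i, hi⟩
      refine ⟨-(n : ℤ) - 2, ?_⟩
      simp only []
      rw [if_neg (by omega : ¬ (0:ℤ) ≤ -(n : ℤ) - 2)]
      have ht1 : (-(-(n : ℤ) - 2) - 1).toNat = n + 1 := by omega
      rw [ht1]
      exact lt_of_lt_of_le (hqci n) (Subtype.coe_le_coe.mpr hn)
  obtain ⟨jj, hjjmono, hjjF, hjjiso, hjjcof, hjjcoi⟩ := hjj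
  let e : ∀ z : ℤ, A (jj z) ≃o A t := fun z => Classical.choice (hjjiso z)
  -- the ℤ-indexed cofinal-coinitial sequence in St
  obtain ⟨cs, hcs⟩ := SS.cof_subset hSSt St hSt
  obtain ⟨cis, hcis⟩ := SS.coi_subset hSSt St hSt
  have hcex : ∃ c : ℤ → ↥St, Monotone c ∧ (∀ s, ∃ z, s ≤ c z) ∧ (∀ s, ∃ z : ℤ, c z ≤ s) := by
    let M : ℕ → ↥St := fun n => Nat.rec (cs 0) (fun n prev => max prev (cs (n + 1))) n
    have hMsucc : ∀ n, M (n + 1) = max (M n) (cs (n + 1)) := fun _ => rfl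
    have hMmono : Monotone M := monotone_nat_of_le_succ (fun n => by
      rw [hMsucc]; exact le_max_left _ _)
    have hMcs : ∀ n, cs n ≤ M n := by
      intro n
      cases n with
      | zero => exact le_rfl
      | succ n => rw [hMsucc]; exact le_max_right _ _
    let m : ℕ → ↥St := fun n => Nat.rec (min (cs 0) (cis 0)) (fun n prev => min prev (cis (n + 1))) n
    have hmsucc : ∀ n, m (n + 1) = min (m n) (cis (n + 1)) := fun _ => rfl
    have hmanti : Antitone m := antitone_nat_of_succ_le (fun n => by
      rw [hmsucc]; exact min_le_left _ _)
    have hmcis : ∀ n, m n ≤ cis n := by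
      intro n
      cases n with
      | zero => exact min_le_right _ _
      | succ n => rw [hmsucc]; exact min_le_right _ _
    have hmM : ∀ n k, m n ≤ M k := by
      intro n k
      calc m n ≤ m 0 := hmanti (Nat.zero_le _)
        _ ≤ cs 0 := min_le_left _ _
        _ ≤ M k := hMmono (Nat.zero_le _)
    refine ⟨fun z => if 0 ≤ z then M z.toNat else m (-z).toNat, ?_, ?_, ?_⟩
    · intro z z' h
      by_cases h1 : 0 ≤ z
      · have h2 : 0 ≤ z' := by omega
        simp only [if_pos h1, if_pos h2]
        exact hMmono (by omega)
      · by_cases h2 : 0 ≤ z'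
        · simp only [if_neg h1, if_pos h2]
          exact hmM _ _
        · simp only [if_neg h1, if_neg h2]
          exact hmanti (by omega)
    · intro s
      obtain ⟨n, hn⟩ := hcs s
      refine ⟨(n : ℤ), ?_⟩
      simp only []
      rw [if_pos (by omega : (0:ℤ) ≤ (n:ℤ))]
      have ht1 : ((n : ℤ)).toNat = n := by omega
      rw [ht1]
      exact hn.trans (hMcs n)
    · intro s
      obtain ⟨n, hn⟩ := hcis s
      refine ⟨-(n : ℤ) - 1, ?_⟩
      simp only []
      rw [if_neg (by omega : ¬ (0:ℤ) ≤ -(n:ℤ) - 1)]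
      have ht1 : (-(-(n : ℤ) - 1)).toNat = n + 1 := by omega
      rw [ht1]
      calc m (n + 1) ≤ m n := hmanti (Nat.le_succ n)
        _ ≤ cis n := hmcis n
        _ ≤ s := hn
  obtain ⟨c, hcmono, hccof, hccoi⟩ := hcex
  -- surjection of A t onto St
  obtain ⟨ht, htm, hts⟩ := hSSt St hSt
  -- the index function
  have hNex : ∀ i : I, ∃ n : ℤ, i ∈ F → (jj n ≤ i ∧ ∀ m, jj m ≤ i → m ≤ n) := by
    intro i
    by_cases hi : i ∈ F
    · obtain ⟨b, hb⟩ := hjjcof i hi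
      have hbdd : ∀ z : ℤ, jj z ≤ i → z ≤ b := by
        intro z hz
        by_contra hcon
        push_neg at hcon
        exact absurd (lt_of_lt_of_le hb (le_trans (hjjmono hcon).le hz)) (lt_irrefl i)
      obtain ⟨n0, hn0⟩ := hjjcoi i hi
      obtain ⟨ub, hub1, hub2⟩ := Int.exists_greatest_of_bdd ⟨b, hbdd⟩ ⟨n0, hn0.le⟩
      exact ⟨ub, fun _ => ⟨hub1, hub2⟩⟩
    · exact ⟨0, fun h => absurd h hi⟩
  choose N hN using hNex
  -- the map
  refine ⟨fun i a => if h : i = jj (N i) then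
      max (c (N i - 1)) (min (ht ((e (N i)) ((castIso A h) a))) (c (N i)))
    else c (N i), ?_, ?_, ?_⟩
  · -- cross monotonicity
    intro i hi i' hi' hii' a a'
    have hNi := hN i hi
    have hNi' := hN i' hi'
    have hnn' : N i ≤ N i' := hNi'.2 _ (le_trans hNi.1 hii'.le)
    by_cases h1 : i = jj (N i) <;> by_cases h2 : i' = jj (N i')
    · simp only [dif_pos h1, dif_pos h2]
      rcases lt_or_eq_of_le hnn' with hlt | heq
      · exact le_trans (max_le (hcmono (by omega)) (min_le_right _ _))
          (le_trans (hcmono (by omega)) (le_max_left _ _))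
      · apply absurd hii'
        rw [h1, h2, heq]
        exact lt_irrefl _
    · simp only [dif_pos h1, dif_neg h2]
      exact le_trans (max_le (hcmono (by omega)) (min_le_right _ _)) (hcmono hnn')
    · simp only [dif_neg h1, dif_pos h2]
      rcases lt_or_eq_of_le hnn' with hlt | heq
      · exact le_trans (hcmono (by omega)) (le_max_left _ _)
      · exfalso
        have hle : i' ≤ i := by rw [h2, ← heq]; exact hNi.1
        exact absurd hii' (not_lt.mpr hle)
    · simp only [dif_neg h1, dif_neg h2]
      exact hcmono hnn'
  · -- monotone in each fiber
    intro i a a' haa'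
    dsimp only
    split_ifs with h
    · exact max_le_max le_rfl
        (min_le_min (htm ((e (N i)).monotone ((castIso A h).monotone haa'))) le_rfl)
    · exact le_rfl
  · -- surjectivity
    intro s
    obtain ⟨z1, hz1⟩ := hccof s
    obtain ⟨z0, hz0⟩ := hccoi s
    have hPne : ∃ k : ℤ, z0 ≤ k ∧ s ≤ c k :=
      ⟨max z0 z1, le_max_left _ _, hz1.trans (hcmono (le_max_right _ _))⟩
    obtain ⟨K, ⟨hKz0, hKs⟩, hKmin⟩ :=
      Int.exists_least_of_bdd (P := fun k => z0 ≤ k ∧ s ≤ c k) ⟨z0, fun z hz => hz.1⟩ hPne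
    have hlow : c (K - 1) ≤ s := by
      by_cases hK : z0 ≤ K - 1
      · by_contra hcon
        push_neg at hcon
        exact absurd (hKmin (K - 1) ⟨hK, hcon.le⟩) (by omega)
      · calc c (K - 1) ≤ c z0 := hcmono (by omega)
          _ ≤ s := hz0
    obtain ⟨a0, ha0⟩ := hts s
    have hNK : N (jj K) = K := by
      have h1 := hN (jj K) (hjjF K)
      refine le_antisymm ?_ (h1.2 K le_rfl)
      by_contra hcon
      push_neg at hcon
      exact absurd h1.1 (not_le.mpr (hjjmono hcon))
    have hpf : jj K = jj (N (jj K)) := by rw [hNK]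
    refine ⟨jj K, hjjF K, (castIso A hpf).symm ((e (N (jj K))).symm a0), ?_⟩
    dsimp only
    rw [dif_pos hpf]
    simp only [OrderIso.apply_symm_apply]
    rw [ha0, hNK]
    rw [min_eq_left hKs, max_eq_right hlow]

/-- An `I`-mixed sum of nonempty strongly surjective linear orders, over a dense
open strongly surjective order `I` without endpoints, is strongly surjective. -/
theorem mixed_sum_stronglySurjective {I : Type*} [LinearOrder I] [DenselyOrdered I]
    [NoMinOrder I] [NoMaxOrder I] [Nonempty I]
    (hI : OpenStronglySurjective I)
    (A : I → Type*) [∀ i, LinearOrder (A i)] [∀ i, Nonempty (A i)]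
    (hSS : ∀ i, StronglySurjective (A i))
    (hdense : ∀ i, ∀ x y : I, x < y → ∃ j, x < j ∧ j < y ∧ Nonempty (A j ≃o A i)) :
    StronglySurjective (Σₗ i, A i) := by
  classical
  have hIss : StronglySurjective I := by
    intro X hX
    obtain ⟨f, h1, h2, _⟩ := hI X hX
    exact ⟨f, h1, h2⟩
  intro S hS
  set T : Set I := {i | ∃ a : A i, toLex ⟨i, a⟩ ∈ S} with hTdef
  have hTne : T.Nonempty := by
    obtain ⟨z, hz⟩ := hS
    exact ⟨z.1, z.2, hz⟩
  obtain ⟨g, hgm, hgs, hgo⟩ := hI T hTne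
  set St : (t : ↥T) → Set (A t.val) := fun t => {a | toLex ⟨t.val, a⟩ ∈ S} with hStdef
  have hblocks : ∀ t : ↥T, ∃ φ : (i : I) → A i → ↥(St t),
      (∀ i ∈ {i : I | g i = t}, ∀ i' ∈ {i : I | g i = t}, i < i' → ∀ a a', φ i a ≤ φ i' a') ∧
      (∀ i, Monotone (φ i)) ∧
      (∀ s : ↥(St t), ∃ i ∈ {i : I | g i = t}, ∃ a, φ i a = s) := by
    intro t
    apply SS.block (A := A) t.val (hSS t.val) (fun x y h => hdense t.val x y h)
    · obtain ⟨i, hi⟩ := hgs t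
      exact ⟨i, hi⟩
    · intro a ha b hb x hax hxb
      have h1 : g x ≤ t := hb ▸ hgm hxb
      have h2 : t ≤ g x := ha ▸ hgm hax
      exact le_antisymm h1 h2
    · intro i hi
      obtain ⟨y, hy1, hy2⟩ := (hgo t).2 i hi
      exact ⟨y, hy1, hy2⟩
    · intro i hi
      obtain ⟨y, hy1, hy2⟩ := (hgo t).1 i hi
      exact ⟨y, hy1, hy2⟩
    · exact SS.cof_subset hIss _ (hgs t)
    · exact SS.coi_subset hIss _ (hgs t)
    · obtain ⟨a, ha⟩ := t.2
      exact ⟨a, ha⟩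
  choose φ hφ1 hφ2 hφ3 using hblocks
  have lem : ∀ (i : I) (a : A i) (t : ↥T) (h : g i = t),
      (toLex ⟨(g i).val, (φ (g i) i a).val⟩ : Σₗ i, A i) = toLex ⟨t.val, (φ t i a).val⟩ := by
    intro i a t h
    cases h
    rfl
  refine ⟨fun z => ⟨toLex ⟨(g z.1).val, (φ (g z.1) z.1 z.2).val⟩, (φ (g z.1) z.1 z.2).2⟩, ?_, ?_⟩
  · rintro ⟨i, a⟩ ⟨i', a'⟩ hzz'
    rw [Subtype.mk_le_mk]
    rcases Sigma.Lex.le_def.mp hzz' with hlt | ⟨heq, hle⟩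
    · -- first components differ
      have hg : g i ≤ g i' := hgm hlt.le
      rcases lt_or_eq_of_le hg with hglt | hgeq
      · exact Sigma.Lex.left _ _ (Subtype.coe_lt_coe.mpr hglt)
      · rw [lem i' a' (g i) hgeq.symm]
        exact Sigma.Lex.right _ _
          (Subtype.coe_le_coe.mpr (hφ1 (g i) i rfl i' hgeq.symm hlt a a'))
    · -- equal first components
      dsimp only at heq
      subst heq
      dsimp only at hle
      exact Sigma.Lex.right _ _ (Subtype.coe_le_coe.mpr (hφ2 (g i) i hle))
  · rintro ⟨z, hz⟩
    obtain ⟨i₀, a₀⟩ := z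
    have ht0 : i₀ ∈ T := ⟨a₀, hz⟩
    obtain ⟨i, hiF, a, ha⟩ := hφ3 ⟨i₀, ht0⟩ ⟨a₀, hz⟩
    refine ⟨toLex ⟨i, a⟩, ?_⟩
    apply Subtype.ext
    show (toLex ⟨(g i).val, (φ (g i) i a).val⟩ : Σₗ i, A i) = toLex ⟨i₀, a₀⟩
    rw [lem i a ⟨i₀, ht0⟩ hiF, ha]
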